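/- In the game G, suppose arccos(⟪θ*_A, θ*_D⟫) < π − arcsin(α/(1−α)). Let s = sign(⟪θ*_D, R θ*_A⟫), and define θ'_D = s · R θ*_A and θ'_A = (√(1 − 2α) · θ*_A − α s · R θ*_A)/(1 − α). Then s ≠ 0, both θ'_A and θ'_D are unit vectors, and (θ'_A, θ'_D) is a pure strategy Nash equilibrium of G; in particular a pure strategy Nash equilibrium exists. -/

import Mathlib

open Real

/-- The aggregate vector `(α θ_D + (1−α) θ_A)/‖α θ_D + (1−α) θ_A‖`. -/
noncomputable def aggregate (α : ℝ) (θA θD : EuclideanSpace ℝ (Fin 2)) :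
    EuclideanSpace ℝ (Fin 2) :=
  (‖α • θD + (1 - α) • θA‖)⁻¹ • (α • θD + (1 - α) • θA)

/-- `(θA', θD')` is a pure strategy Nash equilibrium of the game `G` with minority share `α`
and true preference vectors `θAstar`, `θDstar`: both strategies are unit vectors, and each is
a best response (payoffs are inner products of the aggregate with the true vectors). -/
def IsNashEq (α : ℝ) (θAstar θDstar θA' θD' : EuclideanSpace ℝ (Fin 2)) : Prop :=
  ‖θA'‖ = 1 ∧ ‖θD'‖ = 1 ∧
  (∀ θA : EuclideanSpace ℝ (Fin 2), ‖θA‖ = 1 →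
    (inner ℝ (aggregate α θA θD') θAstar : ℝ) ≤ (inner ℝ (aggregate α θA' θD') θAstar : ℝ)) ∧
  (∀ θD : EuclideanSpace ℝ (Fin 2), ‖θD‖ = 1 →
    (inner ℝ (aggregate α θA' θD) θDstar : ℝ) ≤ (inner ℝ (aggregate α θA' θD') θDstar : ℝ))

/-- Rotation by `π/2`: `R(x, y) = (−y, x)`. -/
noncomputable def Rot (x : EuclideanSpace ℝ (Fin 2)) : EuclideanSpace ℝ (Fin 2) :=
  (WithLp.equiv 2 (Fin 2 → ℝ)).symm ![-(x 1), x 0]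

/- ### Auxiliary lemmas -/

lemma norm_two' (x : EuclideanSpace ℝ (Fin 2)) : ‖x‖ = Real.sqrt (x 0^2 + x 1^2) := by
  rw [EuclideanSpace.norm_eq]
  simp [Fin.sum_univ_two, sq_abs]

lemma inner_two' (x y : EuclideanSpace ℝ (Fin 2)) : (inner ℝ x y : ℝ) = x 0 * y 0 + x 1 * y 1 := by
  simp [PiLp.inner_apply, RCLike.inner_apply, Fin.sum_univ_two, conj_trivial]; ring

lemma Rot_zero' (x : EuclideanSpace ℝ (Fin 2)) : Rot x 0 = -(x 1) := by
  simp [Rot]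

lemma Rot_one' (x : EuclideanSpace ℝ (Fin 2)) : Rot x 1 = x 0 := by
  simp [Rot]

set_option maxHeartbeats 800000 in
lemma hru_aux (a r p q : ℝ) (ha : 0 < a) (hr0 : 0 < r) (hpq : p^2+q^2=1) (hq1 : q ≤ 1) :
    0 ≤ r*(a*p+r) + a^2*(1-q) := by
  have hK : 0 ≤ r^2 + a^2*(1-q) := by nlinarith [sq_nonneg r, sq_nonneg a]
  have key : (r^2+a^2*(1-q))^2 - (r*a)^2*(1-q^2) = r^4 + (1-q)^2*a^2*(a^2+r^2) := by ring
  nlinarith [key, hpq, sq_nonneg (1-q), hK, sq_nonneg (r*a*p), sq_nonneg ((1-q)*a), sq_nonneg (r*a*p + r^2 + a^2*(1-q))]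

lemma Qpos (a r g t p q : ℝ) (ha : 0 < a) (hr : r^2 = 1-2*a) (hr0 : 0 < r)
    (hg : 0 ≤ g) (hgt : g^2 + t^2 = 1) (ht : 0 < t) (he : g*(1-a) ≤ r)
    (hpq : p^2 + q^2 = 1) (ha1 : (0:ℝ) < 1 - a) :
    0 ≤ 2*g*t*(a*p+r) + a*(1-q)*(t^2-g^2) := by
  have h1 : a^2 ≤ (t*(1-a))^2 := by
    nlinarith [mul_nonneg (sub_nonneg.2 he) (show (0:ℝ) ≤ r + g*(1-a) by nlinarith [mul_nonneg hg ha1.le])]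
  have ht1a : a ≤ t*(1-a) := by nlinarith [mul_pos ht ha1]
  have htr : a*g ≤ t*r := by nlinarith [mul_nonneg hg (sub_nonneg.2 he)]
  have hC : a ≤ 2*g*t*r + a*(t^2-g^2) := by nlinarith [mul_nonneg hg (sub_nonneg.2 htr)]
  have hCsq : (2*g*t*a)^2 + (a*(t^2-g^2))^2 ≤ (2*g*t*r + a*(t^2-g^2))^2 := by
    have key : (2*g*t*r + a*(t^2-g^2))^2 - (2*g*t*a)^2 - (a*(t^2-g^2))^2
        = 4*(g*t)*((g*r+a*t)*(t*r-a*g)) := by ring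
    nlinarith [mul_nonneg (mul_nonneg hg ht.le) (mul_nonneg (show (0:ℝ) ≤ g*r+a*t by nlinarith [mul_nonneg hg hr0.le, mul_nonneg ha.le ht.le]) (sub_nonneg.2 htr))]
  nlinarith [sq_nonneg (2*g*t*a*q + a*(t^2-g^2)*p), hC, hCsq, hpq]

set_option maxHeartbeats 800000 in
lemma core (a r c t p q : ℝ) (ha : 0 < a) (ha2 : a < 1/2) (hr : r^2 = 1-2*a) (hr0 : 0 < r)
    (hct : c^2 + t^2 = 1) (ht : 0 < t) (hang : 0 < (1-a)*c + r) (hpq : p^2 + q^2 = 1) :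
    (a*p+r)*c + a*(q-1)*t ≤ c * Real.sqrt ((a*p+r)^2 + (a*(q-1))^2) := by
  have ha1 : (0:ℝ) < 1 - a := by linarith
  set u := a*p+r with hu
  set w := a*(q-1) with hw
  set N := Real.sqrt (u^2 + w^2) with hN
  have hN0 : 0 ≤ N := Real.sqrt_nonneg _
  have hN2 : N^2 = u^2 + w^2 := Real.sq_sqrt (by positivity)
  have hq1 : q ≤ 1 := by nlinarith [sq_nonneg p, sq_nonneg q]
  have huN : u ≤ N := by
    have h1 : Real.sqrt (u^2) ≤ N := Real.sqrt_le_sqrt (by nlinarith [sq_nonneg w])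
    have h2 : u ≤ Real.sqrt (u^2) := by
      rw [Real.sqrt_sq_eq_abs]; exact le_abs_self u
    linarith
  rcases le_or_gt 0 c with hc | hc
  · have h1 : c*u ≤ c*N := mul_le_mul_of_nonneg_left huN hc
    have h2 : a*(q-1)*t ≤ 0 := by nlinarith [mul_nonneg (mul_nonneg ha.le (sub_nonneg.2 hq1)) ht.le]
    nlinarith
  · set g := -c with hg
    have hg0 : 0 < g := by simp [hg]; linarith
    have he : g*(1-a) ≤ r := by nlinarith
    have hgt : g^2 + t^2 = 1 := by rw [hg]; nlinarith
    have hQ := Qpos a r g t p q ha hr hr0 hg0.le hgt ht he hpq ha1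
    set B := g*u + a*t*(1-q) with hB
    have hBpos : 0 ≤ B := by
      rcases le_or_gt 0 u with hu0 | hu0
      · have := mul_nonneg hg0.le hu0
        have := mul_nonneg (mul_nonneg ha.le ht.le) (sub_nonneg.2 hq1)
        rw [hB]; nlinarith
      · have hru : 0 ≤ r*u + a^2*(1-q) := by
          rw [hu]; exact hru_aux a r p q ha hr0 hpq hq1
        have h1 : r*u ≤ g*(1-a)*u := by
          nlinarith [mul_nonneg (sub_nonneg.2 he) (neg_nonneg.2 hu0.le)]
        have h2 : a^2*(1-q) ≤ a*t*(1-a)*(1-q) := by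
          have ht1a : a ≤ t*(1-a) := by
            have hA : a^2 ≤ (t*(1-a))^2 := by
              nlinarith [mul_nonneg (sub_nonneg.2 he) (show (0:ℝ) ≤ r + g*(1-a) by nlinarith [mul_nonneg hg0.le ha1.le])]
            nlinarith [mul_pos ht ha1]
          nlinarith [mul_nonneg (mul_nonneg ha.le (sub_nonneg.2 hq1)) (sub_nonneg.2 ht1a)]
        nlinarith
    have hsq : (g*N)^2 ≤ B^2 := by
      have hid : B^2 - (g*N)^2 = a*(1-q)*(2*g*t*u + a*(1-q)*(t^2-g^2)) := by
        have : (g*N)^2 = g^2*(u^2+w^2) := by rw [mul_pow, hN2]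
        rw [this, hB, hw]; ring
      have h2 : 0 ≤ 2*g*t*u + a*(1-q)*(t^2-g^2) := hQ
      nlinarith [mul_nonneg (mul_nonneg ha.le (sub_nonneg.2 hq1)) h2]
    have hfin : g*N ≤ B := by
      have h1 := Real.sqrt_le_sqrt hsq
      rwa [Real.sqrt_sq (by positivity), Real.sqrt_sq hBpos] at h1
    have : c*N = -(g*N) := by rw [hg]; ring
    nlinarith [hfin]

lemma norm_mix_lower (α : ℝ) (hα : 0 < α) (hα' : α < 1/2)
    (z w : EuclideanSpace ℝ (Fin 2)) (hz : ‖z‖ = 1) (hw : ‖w‖ = 1) :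
    1 - 2*α ≤ ‖α • z + (1 - α) • w‖ := by
  have h1α : (0:ℝ) < 1 - α := by linarith
  have h := norm_sub_norm_le ((1-α) • w) (-(α • z))
  rw [sub_neg_eq_add, norm_neg, norm_smul, norm_smul, hz, hw] at h
  rw [Real.norm_eq_abs, Real.norm_eq_abs, abs_of_pos h1α, abs_of_pos hα] at h
  calc 1 - 2*α = (1-α)*1 - α*1 := by ring
    _ ≤ ‖(1-α) • w + α • z‖ := h
    _ = ‖α • z + (1-α) • w‖ := by rw [add_comm]

set_option maxHeartbeats 1600000 in
/-- Theorem 2 (existence/sufficiency): if `∠(θ*_A, θ*_D) < π − arcsin(α/(1−α))`, then with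
`s = sign(⟪θ*_D, R θ*_A⟫)`, the pair `θ'_D = s • R θ*_A`,
`θ'_A = (√(1 − 2α) θ*_A − αs • R θ*_A)/(1 − α)` is a pure strategy Nash equilibrium. -/
theorem stmt_12 (α : ℝ) (hα : 0 < α) (hα' : α < 1 / 2)
    (θAstar θDstar : EuclideanSpace ℝ (Fin 2))
    (hAs : ‖θAstar‖ = 1) (hDs : ‖θDstar‖ = 1) (hne : θAstar ≠ θDstar)
    (hangle : Real.arccos (inner ℝ θAstar θDstar : ℝ) < Real.pi - Real.arcsin (α / (1 - α))) :
    Real.sign (inner ℝ θDstar (Rot θAstar) : ℝ) ≠ 0 ∧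
    ‖(1 - α)⁻¹ • (Real.sqrt (1 - 2 * α) • θAstar -
        (α * Real.sign (inner ℝ θDstar (Rot θAstar) : ℝ)) • Rot θAstar)‖ = 1 ∧
    ‖Real.sign (inner ℝ θDstar (Rot θAstar) : ℝ) • Rot θAstar‖ = 1 ∧
    IsNashEq α θAstar θDstar
      ((1 - α)⁻¹ • (Real.sqrt (1 - 2 * α) • θAstar -
        (α * Real.sign (inner ℝ θDstar (Rot θAstar) : ℝ)) • Rot θAstar))
      (Real.sign (inner ℝ θDstar (Rot θAstar) : ℝ) • Rot θAstar) := by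
  have h1α : (0:ℝ) < 1 - α := by linarith
  have h2α : (0:ℝ) < 1 - 2*α := by linarith
  set c : ℝ := (inner ℝ θAstar θDstar : ℝ) with hc_def
  set t : ℝ := (inner ℝ θDstar (Rot θAstar) : ℝ) with ht_def
  set r : ℝ := Real.sqrt (1 - 2 * α) with hr_def
  set s : ℝ := Real.sign t with hs_def
  have hr2 : r^2 = 1 - 2*α := Real.sq_sqrt h2α.le
  have hr0 : 0 < r := Real.sqrt_pos.mpr h2α
  set a0 : ℝ := θAstar 0 with ha0
  set a1 : ℝ := θAstar 1 with ha1
  set d0 : ℝ := θDstar 0 with hd0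
  set d1 : ℝ := θDstar 1 with hd1
  have hA2 : a0^2 + a1^2 = 1 := by
    have h := norm_two' θAstar; rw [hAs] at h
    exact Real.sqrt_eq_one.mp h.symm
  have hD2 : d0^2 + d1^2 = 1 := by
    have h := norm_two' θDstar; rw [hDs] at h
    exact Real.sqrt_eq_one.mp h.symm
  have hcoordc : c = a0*d0 + a1*d1 := by rw [hc_def, inner_two']
  have hcoordt : t = a0*d1 - a1*d0 := by
    rw [ht_def, inner_two', Rot_zero', Rot_one']; ring
  have hct : c^2 + t^2 = 1 := by
    rw [hcoordc, hcoordt]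
    linear_combination (d0^2+d1^2)*hA2 + hD2
  have hrle : r < 1 - α := by nlinarith [hr2, hr0]
  -- the angle hypothesis gives `0 < (1-α)*c + r`
  have hang : 0 < (1-α)*c + r := by
    have hm0 : (0:ℝ) < α/(1-α) := by positivity
    have hsq : Real.sqrt (1 - (α/(1-α))^2) = r/(1-α) := by
      rw [show 1 - (α/(1-α))^2 = (r/(1-α))^2 by
        field_simp; linear_combination -hr2]
      exact Real.sqrt_sq (by positivity)
    have hpi : Real.pi - Real.arcsin (α/(1-α)) = Real.arccos (-(r/(1-α))) := by
      rw [Real.arccos_neg, Real.arcsin_eq_arccos hm0.le, hsq]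
    rw [hpi] at hangle
    have hc1 : |c| ≤ 1 := by
      have := abs_real_inner_le_norm θAstar θDstar
      rwa [hAs, hDs, mul_one] at this
    have hy1 : r/(1-α) ≤ 1 := by
      rw [div_le_one h1α]; linarith
    have hky : -(r/(1-α)) < c := by
      by_contra hcon
      push_neg at hcon
      have h1 : Real.arccos (-(r/(1-α))) ≤ Real.arccos c := by
        rcases hcon.lt_or_eq with h' | h'
        · exact (Real.strictAntiOn_arccos ⟨(abs_le.mp hc1).1, (abs_le.mp hc1).2⟩
            ⟨by linarith [div_nonneg hr0.le h1α.le], by linarith [div_nonneg hr0.le h1α.le]⟩ h').le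
        · rw [h']
      linarith
    have h' := mul_lt_mul_of_pos_right hky h1α
    rw [neg_mul, div_mul_cancel₀ _ (ne_of_gt h1α)] at h'
    linarith
  -- t ≠ 0
  have ht0 : t ≠ 0 := by
    intro h
    rw [h] at hct
    have : (c-1)*(c+1) = 0 := by nlinarith
    rcases mul_eq_zero.mp this with h' | h'
    · -- c = 1 : vectors equal
      have hc1 : c = 1 := by linarith
      apply hne
      have e0 : a0 = d0 := by nlinarith [sq_nonneg (a0-d0), sq_nonneg (a1-d1), hcoordc]
      have e1 : a1 = d1 := by nlinarith [sq_nonneg (a0-d0), sq_nonneg (a1-d1), hcoordc]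
      ext i
      fin_cases i
      · exact e0
      · exact e1
    · have hc1 : c = -1 := by linarith
      rw [hc1] at hang
      nlinarith
  have hs_cases : (s = 1 ∧ 0 < t) ∨ (s = -1 ∧ t < 0) := by
    rcases lt_trichotomy t 0 with h | h | h
    · exact Or.inr ⟨by rw [hs_def, Real.sign_of_neg h], h⟩
    · exact absurd h ht0
    · exact Or.inl ⟨by rw [hs_def, Real.sign_of_pos h], h⟩
  have hs2 : s^2 = 1 := by rcases hs_cases with ⟨h, _⟩ | ⟨h, _⟩ <;> rw [h] <;> norm_num
  have hsne : s ≠ 0 := by rcases hs_cases with ⟨h, _⟩ | ⟨h, _⟩ <;> rw [h] <;> norm_num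
  -- unit norms
  have hDnorm : ‖s • Rot θAstar‖ = 1 := by
    rw [norm_two']
    simp only [PiLp.smul_apply, Rot_zero', Rot_one', smul_eq_mul, ← ha0, ← ha1]
    rw [Real.sqrt_eq_one]
    linear_combination s^2*hA2 + hs2
  have hAnorm : ‖(1 - α)⁻¹ • (r • θAstar - (α * s) • Rot θAstar)‖ = 1 := by
    rw [norm_two']
    simp only [PiLp.smul_apply, PiLp.sub_apply, Rot_zero', Rot_one', smul_eq_mul, ← ha0, ← ha1]
    rw [Real.sqrt_eq_one]
    field_simp
    linear_combination (r^2+α^2*s^2)*hA2 + hr2 + α^2*hs2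
  -- the aggregate at the equilibrium point is θAstar
  have hveq : α • (s • Rot θAstar) + (1 - α) • ((1 - α)⁻¹ • (r • θAstar - (α * s) • Rot θAstar))
      = r • θAstar := by
    rw [smul_smul (1-α) (1-α)⁻¹, mul_inv_cancel₀ (ne_of_gt h1α), one_smul, smul_smul α s]
    module
  have haggr : aggregate α ((1 - α)⁻¹ • (r • θAstar - (α * s) • Rot θAstar)) (s • Rot θAstar)
      = θAstar := by
    rw [aggregate, hveq, norm_smul, hAs, Real.norm_eq_abs, abs_of_pos hr0, mul_one,
      smul_smul, inv_mul_cancel₀ (ne_of_gt hr0), one_smul]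
  refine ⟨hsne, hAnorm, hDnorm, hAnorm, hDnorm, ?_, ?_⟩
  · -- A's best response
    intro θA hθA
    rw [haggr]
    have hRHS : (inner ℝ θAstar θAstar : ℝ) = 1 := by
      rw [real_inner_self_eq_norm_sq, hAs]; norm_num
    rw [hRHS]
    have hvlow := norm_mix_lower α hα hα' (s • Rot θAstar) θA hDnorm hθA
    have hvne : ‖α • (s • Rot θAstar) + (1 - α) • θA‖ ≠ 0 :=
      ne_of_gt (lt_of_lt_of_le h2α hvlow)
    simp only [aggregate]
    calc (inner ℝ ((‖α • (s • Rot θAstar) + (1 - α) • θA‖)⁻¹ •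
            (α • (s • Rot θAstar) + (1 - α) • θA)) θAstar : ℝ)
        ≤ ‖(‖α • (s • Rot θAstar) + (1 - α) • θA‖)⁻¹ •
            (α • (s • Rot θAstar) + (1 - α) • θA)‖ * ‖θAstar‖ := real_inner_le_norm _ _
      _ = 1 := by
          rw [norm_smul, hAs, Real.norm_eq_abs,
            abs_of_nonneg (inv_nonneg.2 (norm_nonneg _)), inv_mul_cancel₀ hvne, mul_one]
  · -- D's best response
    intro θD hθD
    rw [haggr, ← hc_def]
    set x : ℝ := θD 0 with hx
    set y : ℝ := θD 1 with hy
    have hxy : x^2 + y^2 = 1 := by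
      have h := norm_two' θD; rw [hθD] at h
      exact Real.sqrt_eq_one.mp h.symm
    set p : ℝ := a0*x + a1*y with hp
    set q : ℝ := a0*y - a1*x with hq
    have hpq : p^2 + q^2 = 1 := by
      rw [hp, hq]; linear_combination (x^2+y^2)*hA2 + hxy
    set v : EuclideanSpace ℝ (Fin 2) :=
      α • θD + (1 - α) • ((1 - α)⁻¹ • (r • θAstar - (α * s) • Rot θAstar)) with hv
    have hv0 : v 0 = α*x + r*a0 + α*s*a1 := by
      rw [hv]
      simp only [PiLp.add_apply, PiLp.smul_apply, PiLp.sub_apply, Rot_zero', Rot_one',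
        smul_eq_mul, ← ha0, ← ha1, ← hx]
      field_simp; ring
    have hv1 : v 1 = α*y + r*a1 - α*s*a0 := by
      rw [hv]
      simp only [PiLp.add_apply, PiLp.smul_apply, PiLp.sub_apply, Rot_zero', Rot_one',
        smul_eq_mul, ← ha0, ← ha1, ← hy]
      field_simp; ring
    have hinner : (inner ℝ v θDstar : ℝ) = (α*p+r)*c + α*(q-s)*t := by
      rw [inner_two', hv0, hv1, ← hd0, ← hd1, hcoordc, hcoordt, hp, hq]
      linear_combination (-(α*(x*d0+y*d1)))*hA2
    have hnormv : ‖v‖ = Real.sqrt ((α*p+r)^2 + (α*(q-s))^2) := by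
      rw [norm_two', hv0, hv1]
      congr 1
      rw [hp, hq]
      linear_combination (r^2+α^2*s^2 - α^2*(x^2+y^2))*hA2
    have hvlow := norm_mix_lower α hα hα' θD
      ((1 - α)⁻¹ • (r • θAstar - (α * s) • Rot θAstar)) hθD hAnorm
    have hvpos : 0 < ‖v‖ := lt_of_lt_of_le h2α (by rw [hv]; exact hvlow)
    have hcore' : (inner ℝ v θDstar : ℝ) ≤ c * ‖v‖ := by
      rw [hinner, hnormv]
      rcases hs_cases with ⟨hs1, htpos⟩ | ⟨hs1, htneg⟩
      · rw [hs1]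
        exact core α r c t p q hα hα' hr2 hr0 hct htpos hang hpq
      · rw [hs1]
        have h1 := core α r c (-t) p (-q) hα hα' hr2 hr0 (by linear_combination hct)
          (by linarith) hang (by linear_combination hpq)
        have e2 : (α*(-q-1))^2 = (α*(q - (-1:ℝ)))^2 := by ring
        rw [e2] at h1
        calc (α*p+r)*c + α*(q-(-1:ℝ))*t = (α*p+r)*c + α*(-q-1)*(-t) := by ring
          _ ≤ _ := h1
    have hrw : (inner ℝ (aggregate α
        ((1 - α)⁻¹ • (r • θAstar - (α * s) • Rot θAstar)) θD) θDstar : ℝ)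
        = ‖v‖⁻¹ * (inner ℝ v θDstar : ℝ) := by
      simp only [aggregate, ← hv, real_inner_smul_left]
    rw [hrw]
    calc ‖v‖⁻¹ * (inner ℝ v θDstar : ℝ) ≤ ‖v‖⁻¹ * (c * ‖v‖) :=
          mul_le_mul_of_nonneg_left hcore' (inv_nonneg.2 (norm_nonneg v))
      _ = c := by field_simp
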